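/- Soundness of the SyncFold rule: for regular expressions p and q over an alphabet Σ, a character c, and a string s, if Sync(s, δ_c p, δ_c q) holds, then Sync(c::s, p, q) holds. -/
import Mathlib

open RegularExpression

variable {α : Type*}

/-- The derivative of a regular expression with respect to a string,
folding the Brzozowski character derivative over the string. -/
def derivs [DecidableEq α] (p : RegularExpression α) (w : List α) : RegularExpression α :=
  w.foldl RegularExpression.deriv p

/-- `w` is a counterexample for `p` and `q` if exactly one of them accepts `w`. -/
def Counterexample (p q : RegularExpression α) (w : List α) : Prop :=
  Xor' (w ∈ p.matches') (w ∈ q.matches')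

/-- A string `w` is reducible (for `p` and `q`) if `w = s ++ t ++ u` with `t` nonempty,
`L(δ_s p) = L(δ_{s++t} p)` and `L(δ_s q) = L(δ_{s++t} q)`. -/
def Reducible [DecidableEq α] (p q : RegularExpression α) (w : List α) : Prop :=
  ∃ s t u : List α, w = s ++ t ++ u ∧ t ≠ [] ∧
    (derivs p s).matches' = (derivs p (s ++ t)).matches' ∧
    (derivs q s).matches' = (derivs q (s ++ t)).matches'

/-- `Sync s p q` : `p` and `q` have no irreducible counterexample having `s` as a prefix. -/
def Sync [DecidableEq α] (s : List α) (p q : RegularExpression α) : Prop :=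
  ∀ w : List α, s <+: w → Counterexample p q w → Reducible p q w

lemma mem_deriv_iff' [DecidableEq α] (p : RegularExpression α) (a : α) (x : List α) :
    x ∈ (p.deriv a).matches' ↔ (a :: x) ∈ p.matches' := by
  rw [← rmatch_iff_matches', ← rmatch_iff_matches', rmatch]

theorem syncFold_sound [DecidableEq α] (p q : RegularExpression α) (c : α) (s : List α)
    (h : Sync s (p.deriv c) (q.deriv c)) : Sync (c :: s) p q := by
  intro w hpre hce
  obtain ⟨u, rfl⟩ := hpre
  have hce' : Counterexample (p.deriv c) (q.deriv c) (s ++ u) := by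
    unfold Counterexample at *
    rw [mem_deriv_iff', mem_deriv_iff']
    exact hce
  obtain ⟨s', t, u', heq, ht, hp, hq⟩ := h (s ++ u) ⟨u, rfl⟩ hce'
  refine ⟨c :: s', t, u', by simp [heq], ht, ?_, ?_⟩
  · simpa [derivs] using hp
  · simpa [derivs] using hq
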